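/- Let l be a finite-dimensional real Lie algebra, (a,⟨·,·⟩_a) a pseudo-Euclidean vector space with an orthogonal representation ρ: l → so(a), α ∈ Hom(Λ²l, a) and γ ∈ Hom(Λ³l, ℝ). Define on d = l* ⊕ a ⊕ l the bracket [L₁,L₂] = γ(L₁,L₂,·) + α(L₁,L₂) + [L₁,L₂]_l, [L,A] = -⟨A, α(L,·)⟩_a + ρ(L)A, [A₁,A₂] = ⟨ρ(·)A₁, A₂⟩_a ∈ l*, [L,Z] = ad*(L)Z, [l*, l* ⊕ a] = 0. If this bracket satisfies the Jacobi identity, then the inner product ⟨Z₁+A₁+L₁, Z₂+A₂+L₂⟩ = ⟨A₁,A₂⟩_a + Z₁(L₂) + Z₂(L₁) is invariant, i.e. d_{α,γ}(l,a) is a metric Lie algebra. -/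

import Mathlib

/-- The bracket of the quadratic extension `d_{α,γ}(l,a)` on `l* ⊕ a ⊕ l`. -/
noncomputable def dBracket {l a : Type*} [LieRing l] [LieAlgebra ℝ l]
    [AddCommGroup a] [Module ℝ a]
    (Ba : LinearMap.BilinForm ℝ a) (ρ : l →ₗ[ℝ] a →ₗ[ℝ] a)
    (α : l →ₗ[ℝ] l →ₗ[ℝ] a) (γ : l →ₗ[ℝ] l →ₗ[ℝ] l →ₗ[ℝ] ℝ)
    (x y : Module.Dual ℝ l × a × l) : Module.Dual ℝ l × a × l :=
  (γ x.2.2 y.2.2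
      - (Ba y.2.1).comp (α x.2.2) + (Ba x.2.1).comp (α y.2.2)
      + (Ba.flip y.2.1).comp (ρ.flip x.2.1)
      - y.1.comp ((LieAlgebra.ad ℝ l x.2.2 : l →ₗ[ℝ] l))
      + x.1.comp ((LieAlgebra.ad ℝ l y.2.2 : l →ₗ[ℝ] l)),
    α x.2.2 y.2.2 + ρ x.2.2 y.2.1 - ρ y.2.2 x.2.1,
    ⁅x.2.2, y.2.2⁆)

/-- The inner product of the quadratic extension `d_{α,γ}(l,a)` on `l* ⊕ a ⊕ l`. -/
def dInner {l a : Type*} [LieRing l] [LieAlgebra ℝ l]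
    [AddCommGroup a] [Module ℝ a]
    (Ba : LinearMap.BilinForm ℝ a)
    (x y : Module.Dual ℝ l × a × l) : ℝ :=
  Ba x.2.1 y.2.1 + x.1 y.2.2 + y.1 x.2.2

/-- If the bracket of `d = l* ⊕ a ⊕ l` defined from an orthogonal representation `ρ`, a
2-cochain `α` and a 3-cochain `γ` satisfies the Jacobi identity, then the inner product
`⟨Z₁+A₁+L₁, Z₂+A₂+L₂⟩ = ⟨A₁,A₂⟩_a + Z₁(L₂) + Z₂(L₁)` is symmetric, non-degenerate and
invariant: `d_{α,γ}(l,a)` is a metric Lie algebra. -/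
theorem dExtension_metric
    (l a : Type*) [LieRing l] [LieAlgebra ℝ l] [FiniteDimensional ℝ l]
    [AddCommGroup a] [Module ℝ a] [FiniteDimensional ℝ a]
    (Ba : LinearMap.BilinForm ℝ a)
    (hBa_symm : ∀ A B : a, Ba A B = Ba B A)
    (hBa_nd : Ba.Nondegenerate)
    (ρ : l →ₗ[ℝ] a →ₗ[ℝ] a)
    (hρrep : ∀ L₁ L₂ : l, ρ ⁅L₁, L₂⁆ = ρ L₁ ∘ₗ ρ L₂ - ρ L₂ ∘ₗ ρ L₁)
    (hρorth : ∀ (L : l) (A B : a), Ba (ρ L A) B + Ba A (ρ L B) = 0)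
    (α : l →ₗ[ℝ] l →ₗ[ℝ] a) (hα : ∀ L : l, α L L = 0)
    (γ : l →ₗ[ℝ] l →ₗ[ℝ] l →ₗ[ℝ] ℝ)
    (hγ1 : ∀ L M : l, γ L L M = 0) (hγ2 : ∀ L M : l, γ L M M = 0)
    (hJacobi : ∀ x y z : Module.Dual ℝ l × a × l,
      dBracket Ba ρ α γ x (dBracket Ba ρ α γ y z)
        + dBracket Ba ρ α γ y (dBracket Ba ρ α γ z x)
        + dBracket Ba ρ α γ z (dBracket Ba ρ α γ x y) = 0) :
    (∀ x y : Module.Dual ℝ l × a × l, dInner Ba x y = dInner Ba y x) ∧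
    (∀ x : Module.Dual ℝ l × a × l, (∀ y, dInner Ba x y = 0) → x = 0) ∧
    (∀ x y z : Module.Dual ℝ l × a × l,
      dInner Ba (dBracket Ba ρ α γ x y) z + dInner Ba y (dBracket Ba ρ α γ x z) = 0) := by
  have hα' : ∀ L M : l, α L M = - α M L := by
    intro L M
    have h := hα (L + M)
    simp only [map_add, LinearMap.add_apply, hα, add_zero, zero_add] at h
    rw [eq_neg_iff_add_eq_zero, add_comm]; exact h
  have hγ2' : ∀ L M N : l, γ L M N = - γ L N M := by
    intro L M N
    have h := hγ2 L (M + N)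
    simp only [map_add, LinearMap.add_apply, hγ2, add_zero, zero_add] at h
    linarith [h]
  refine ⟨?_, ?_, ?_⟩
  · intro x y
    simp only [dInner]
    rw [hBa_symm]; ring
  · rintro ⟨Z, A, L⟩ h
    have hA : A = 0 := by
      apply hBa_nd.1
      intro B
      simpa [dInner] using h (0, B, 0)
    have hL : L = 0 := by
      rw [← Module.forall_dual_apply_eq_zero_iff ℝ]
      intro W
      simpa [dInner] using h (W, 0, 0)
    have hZ : Z = 0 := by
      ext M
      simpa [dInner] using h (0, 0, M)
    simp [hA, hL, hZ]
  · rintro ⟨Z₁, A₁, L₁⟩ ⟨Z₂, A₂, L₂⟩ ⟨Z₃, A₃, L₃⟩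
    simp only [dInner, dBracket, LinearMap.add_apply, LinearMap.sub_apply, map_add, map_sub,
      LinearMap.coe_comp, Function.comp_apply, LinearMap.flip_apply, LieAlgebra.ad_apply]
    have h1 := hρorth L₁ A₂ A₃
    have h2 : Ba (α L₁ L₂) A₃ = Ba A₃ (α L₁ L₂) := hBa_symm _ _
    have h3 : Ba (ρ L₃ A₁) A₂ = Ba A₂ (ρ L₃ A₁) := hBa_symm _ _
    have h4 : Ba A₁ (α L₃ L₂) = - Ba A₁ (α L₂ L₃) := by rw [hα' L₃ L₂]; simp
    have h5 : γ L₁ L₃ L₂ = - γ L₁ L₂ L₃ := hγ2' L₁ L₃ L₂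
    have h6 : Z₁ ⁅L₃, L₂⁆ = - Z₁ ⁅L₂, L₃⁆ := by
      rw [← lie_skew L₃ L₂, map_neg]
    have hf1 : (Ba.flip A₂) ((ρ L₃) A₁) = Ba ((ρ L₃) A₁) A₂ := rfl
    have hf2 : (Ba.flip A₃) ((ρ L₂) A₁) = Ba ((ρ L₂) A₁) A₃ := rfl
    linarith
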